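/- Let (A, B, E, E') be a C*-operator-valued infinitesimal probability space, let x = x* ∈ A, and set X = [[x, 0], [0, x]] ∈ Ã. Then for all b, c ∈ B with (‖b‖ + ‖c‖)·‖x‖ < 1, the element I − [[b, c], [0, b]] X is invertible in Ã and ϑ_X([[b, c], [0, b]]) := Ẽ((I − [[b, c], [0, b]] X)⁻¹ [[b, c], [0, b]] X) = [[ϑ_x(b), (Dϑ_x)(b)(c) + ∂ϑ_x(b)], [0, ϑ_x(b)]], where Dϑ_x is the Fréchet derivative of ϑ_x and ∂ϑ_x(b) = E'((1 − bx)⁻¹ bx). -/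

import Mathlib

open scoped BigOperators

variable {A B : Type*} [CStarAlgebra A] [CStarAlgebra B]

/-- `(A, B, E, E')` is a C*-operator-valued infinitesimal probability space, where the unital
C*-subalgebra `B ⊆ A` is realized via the isometric unital star-algebra embedding `ι : B → A`:
`E` is a bounded, completely positive, `B`-`B`-bimodule linear map with `E 1 = 1`, and `E'` is a
bounded, selfadjoint, `B`-`B`-bimodule linear map with `E' 1 = 0`. -/
structure IsCStarOVIProbSpace (ι : B →⋆ₐ[ℂ] A) (E E' : A →L[ℂ] B) : Prop where
  isometry : Isometry ι
  E_one : E 1 = 1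
  E_bimod : ∀ (b₁ b₂ : B) (a : A), E (ι b₁ * a * ι b₂) = b₁ * E a * b₂
  E_cp : ∀ (n : ℕ) (M : Matrix (Fin n) (Fin n) A),
      (∃ N : Matrix (Fin n) (Fin n) A, M = star N * N) →
      ∃ N' : Matrix (Fin n) (Fin n) B, M.map ⇑E = star N' * N'
  E'_one : E' 1 = 0
  E'_selfadj : ∀ a : A, E' (star a) = star (E' a)
  E'_bimod : ∀ (b₁ b₂ : B) (a : A), E' (ι b₁ * a * ι b₂) = b₁ * E' a * b₂

/-- `ϑ_z(b) = E((1 − bz)⁻¹ bz)`. -/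
noncomputable def thetaT (ι : B →⋆ₐ[ℂ] A) (E : A →L[ℂ] B) (z : A) (b : B) : B :=
  E (Ring.inverse (1 - ι b * z) * (ι b * z))

/-- The κ-transform `κ_z(b) = (1 + ϑ_z(b))⁻¹ ϑ_z(b)`. -/
noncomputable def kappaT (ι : B →⋆ₐ[ℂ] A) (E : A →L[ℂ] B) (z : A) (b : B) : B :=
  Ring.inverse (1 + thetaT ι E z b) * thetaT ι E z b

/-- `∂ϑ_z(b) = E'((1 − bz)⁻¹ bz)`. -/
noncomputable def dthetaT (ι : B →⋆ₐ[ℂ] A) (E' : A →L[ℂ] B) (z : A) (b : B) : B :=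
  E' (Ring.inverse (1 - ι b * z) * (ι b * z))

/-- The infinitesimal κ-transform `∂κ_z(b) = (1 + ϑ_z(b))⁻¹ ∂ϑ_z(b) (1 + ϑ_z(b))⁻¹`. -/
noncomputable def dkappaT (ι : B →⋆ₐ[ℂ] A) (E E' : A →L[ℂ] B) (z : A) (b : B) : B :=
  Ring.inverse (1 + thetaT ι E z b) * dthetaT ι E' z b * Ring.inverse (1 + thetaT ι E z b)

open TrivSqZeroExt

/-- The map `Ẽ : Ã → B̃`, `[[a, a'], [0, a]] ↦ [[E a, E' a + E a'], [0, E a]]`, where the upper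
triangular algebra `Ã` (of matrices `[[a, a'], [0, a]]`) is realized as the trivial square-zero
extension `TrivSqZeroExt A A`. -/
noncomputable def tildeE (E E' : A →L[ℂ] B) (p : TrivSqZeroExt A A) : TrivSqZeroExt B B :=
  inl (E p.fst) + inr (E' p.fst + E p.snd)

/-- The embedding of `B̃` into `Ã` induced by `ι`. -/
noncomputable def tildeIota (ι : B →⋆ₐ[ℂ] A) (p : TrivSqZeroExt B B) : TrivSqZeroExt A A :=
  inl (ι p.fst) + inr (ι p.snd)

private lemma inverse_one_sub_mul_self {R : Type*} [Ring R] {y : R} (h : IsUnit (1 - y)) :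
    Ring.inverse (1 - y) * y = Ring.inverse (1 - y) - 1 := by
  have hmc := Ring.inverse_mul_cancel _ h
  have h2 : Ring.inverse (1 - y) * y = Ring.inverse (1 - y) * 1 - Ring.inverse (1 - y) * (1 - y) := by
    rw [← mul_sub, sub_sub_cancel]
  rw [h2, mul_one, hmc]

/-- For a C*-operator-valued infinitesimal probability space `(A, B, E, E')`, a selfadjoint
`x ∈ A` and `X = [[x, 0], [0, x]]`, for all `b, c ∈ B` with `(‖b‖ + ‖c‖)·‖x‖ < 1` the element
`I − [[b, c], [0, b]] X` is invertible in `Ã` and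
`ϑ_X([[b, c], [0, b]]) = [[ϑ_x(b), (Dϑ_x)(b)(c) + ∂ϑ_x(b)], [0, ϑ_x(b)]]`. -/
theorem theta_upper_triangular
    (ι : B →⋆ₐ[ℂ] A) (E E' : A →L[ℂ] B) (h : IsCStarOVIProbSpace ι E E')
    (x : A) (hx : star x = x) (b c : B) (hbc : (‖b‖ + ‖c‖) * ‖x‖ < 1) :
    IsUnit (1 - tildeIota ι (inl b + inr c) * inl x) ∧
    DifferentiableAt ℂ (thetaT ι E x) b ∧
    tildeE E E' (Ring.inverse (1 - tildeIota ι (inl b + inr c) * inl x) *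
        (tildeIota ι (inl b + inr c) * inl x)) =
      inl (thetaT ι E x b) + inr (fderiv ℂ (thetaT ι E x) b c + dthetaT ι E' x b) := by
  have hnorm : ∀ b' : B, ‖ι b'‖ = ‖b'‖ := fun b' =>
    h.isometry.norm_map_of_map_zero (map_zero ι) b'
  -- norms
  have hu : ‖ι b * x‖ < 1 := by
    calc ‖ι b * x‖ ≤ ‖ι b‖ * ‖x‖ := norm_mul_le _ _
      _ = ‖b‖ * ‖x‖ := by rw [hnorm]
      _ ≤ (‖b‖ + ‖c‖) * ‖x‖ := by
          have h1 : (0:ℝ) ≤ ‖c‖ := norm_nonneg _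
          have h2 : (0:ℝ) ≤ ‖x‖ := norm_nonneg _
          nlinarith
      _ < 1 := hbc
  set u : A := ι b * x with hu_def
  set v : A := ι c * x with hv_def
  have hub : IsUnit (1 - u) := (Units.oneSub u hu).isUnit
  set r : A := Ring.inverse (1 - u) with hr_def
  have hr1 : r * (1 - u) = 1 := Ring.inverse_mul_cancel _ hub
  have hr2 : (1 - u) * r = 1 := Ring.mul_inverse_cancel _ hub
  have hr3 : (1 : A) + r * u = r := by
    have h' : r - r * u = 1 := by rw [← mul_one_sub]; exact hr1
    exact (sub_eq_iff_eq_add.mp h').symm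
  -- the continuous linear map b' ↦ ι b' * x
  set L : B →L[ℂ] A :=
    ((ContinuousLinearMap.mul ℂ A).flip x).comp
      (LinearMap.mkContinuous ι.toAlgHom.toLinearMap 1
        (fun b' => by simpa [hnorm b'] using le_of_eq (hnorm b'))) with hL_def
  have hLapp : ∀ b' : B, L b' = ι b' * x := fun b' => by
    simp [hL_def, LinearMap.mkContinuous_apply]
  -- differentiability of b' ↦ Ring.inverse (1 - ι b' * x)
  set w : Aˣ := Units.oneSub u hu with hw_def
  have hwval : (w : A) = 1 - u := rfl
  have hwinv : ((w⁻¹ : Aˣ) : A) = r := by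
    rw [hr_def, ← hwval, Ring.inverse_unit]
  have hinner : HasFDerivAt (fun b' : B => 1 - ι b' * x) (-L) b := by
    have : HasFDerivAt (fun b' : B => (1 : A) - L b') (0 - L) b :=
      (hasFDerivAt_const (1 : A) b).sub L.hasFDerivAt
    simpa [hLapp] using this
  have hginv : HasFDerivAt (fun b' : B => Ring.inverse (1 - ι b' * x))
      ((-(ContinuousLinearMap.mulLeftRight ℂ A ↑w⁻¹ ↑w⁻¹)).comp (-L)) b := by
    have hat : HasFDerivAt (Ring.inverse : A → A)
        (-(ContinuousLinearMap.mulLeftRight ℂ A ↑w⁻¹ ↑w⁻¹)) ((fun b' : B => 1 - ι b' * x) b) := by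
      have := hasFDerivAt_ringInverse (𝕜 := ℂ) w
      simpa [hwval] using this
    exact hat.comp b hinner
  -- the auxiliary function φ
  have hφ : HasFDerivAt (fun b' : B => E (Ring.inverse (1 - ι b' * x)) - 1)
      (E.comp ((-(ContinuousLinearMap.mulLeftRight ℂ A ↑w⁻¹ ↑w⁻¹)).comp (-L))) b := by
    have h1 : HasFDerivAt (fun b' : B => E (Ring.inverse (1 - ι b' * x)))
        (E.comp ((-(ContinuousLinearMap.mulLeftRight ℂ A ↑w⁻¹ ↑w⁻¹)).comp (-L))) b :=
      E.hasFDerivAt.comp b hginv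
    exact h1.sub_const (1 : B)
  -- eventual equality of thetaT with φ
  have hev : thetaT ι E x =ᶠ[nhds b] fun b' : B => E (Ring.inverse (1 - ι b' * x)) - 1 := by
    have hopen : IsOpen {b' : B | IsUnit (1 - ι b' * x)} := by
      have hcont : Continuous fun b' : B => 1 - ι b' * x :=
        continuous_const.sub ((h.isometry.continuous).mul continuous_const)
      exact Units.isOpen.preimage hcont
    have hmem : {b' : B | IsUnit (1 - ι b' * x)} ∈ nhds b := hopen.mem_nhds hub
    filter_upwards [hmem] with b' hb'
    rw [thetaT, inverse_one_sub_mul_self hb', map_sub, h.E_one]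
  have hdiff : DifferentiableAt ℂ (thetaT ι E x) b :=
    hφ.differentiableAt.congr_of_eventuallyEq hev
  -- fderiv formula
  have hfderiv : fderiv ℂ (thetaT ι E x) b c = E (r * v * r) := by
    rw [hev.fderiv_eq, hφ.fderiv]
    simp [hLapp, hwinv, hv_def]
  -- the element p and its components
  set p : TrivSqZeroExt A A := tildeIota ι (inl b + inr c) * inl x with hp_def
  have hp_fst : p.fst = u := by
    simp [hp_def, tildeIota, hu_def]
  have hp_snd : p.snd = v := by
    simp [hp_def, tildeIota, hv_def, op_smul_eq_mul]
  -- invertibility of 1 - p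
  have hfst1p : (1 - p).fst = 1 - u := by rw [fst_sub, fst_one, hp_fst]
  have hunit : IsUnit (1 - p) := by
    rw [isUnit_iff_isUnit_fst, hfst1p]; exact hub
  refine ⟨hunit, hdiff, ?_⟩
  -- explicit inverse
  set q : TrivSqZeroExt A A := inl r + inr (r * v * r) with hq_def
  have hq_fst : q.fst = r := by simp [hq_def]
  have hq_snd : q.snd = r * v * r := by simp [hq_def]
  have hmul1 : (1 - p) * q = 1 := by
    refine TrivSqZeroExt.ext ?_ ?_
    · rw [fst_mul, hfst1p, hq_fst, fst_one, hr2]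
    · rw [snd_mul, snd_one, hfst1p, hq_fst, hq_snd, snd_sub, snd_one, hp_snd]
      rw [smul_eq_mul, op_smul_eq_mul]
      have : (1 - u) * (r * v * r) = v * r := by
        rw [show (1 - u) * (r * v * r) = ((1 - u) * r) * (v * r) by noncomm_ring, hr2, one_mul]
      rw [this]
      noncomm_ring
  have hmul2 : q * (1 - p) = 1 := by
    refine TrivSqZeroExt.ext ?_ ?_
    · rw [fst_mul, hfst1p, hq_fst, fst_one, hr1]
    · rw [snd_mul, snd_one, hfst1p, hq_fst, hq_snd, snd_sub, snd_one, hp_snd]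
      rw [smul_eq_mul, op_smul_eq_mul]
      have : r * v * r * (1 - u) = r * v := by
        rw [mul_assoc (r * v) r (1 - u), hr1, mul_one]
      rw [this]
      noncomm_ring
  have hinv : Ring.inverse (1 - p) = q := by
    letI W : (TrivSqZeroExt A A)ˣ := ⟨1 - p, q, hmul1, hmul2⟩
    rw [show (1 - p) = (W : TrivSqZeroExt A A) from rfl, Ring.inverse_unit]
    rfl
  -- final computation
  have hqp_fst : (q * p).fst = r * u := by rw [fst_mul, hq_fst, hp_fst]
  have hqp_snd : (q * p).snd = r * v * r := by
    rw [snd_mul, hq_fst, hq_snd, hp_fst, hp_snd, smul_eq_mul, op_smul_eq_mul]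
    calc r * v + r * v * r * u = r * v * (1 + r * u) := by noncomm_ring
      _ = r * v * r := by rw [hr3]
  rw [hinv]
  refine TrivSqZeroExt.ext ?_ ?_
  · simp [tildeE, thetaT, hqp_fst, hu_def, hr_def]
  · simp only [tildeE, fst_add, snd_add, fst_inl, snd_inl, fst_inr, snd_inr,
      hqp_fst, hqp_snd, zero_add, add_zero]
    rw [hfderiv, dthetaT, ← hu_def, ← hr_def]
    exact (add_comm _ _)
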